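/- Let (Y(1),Y(0)) be potential outcomes in [0,∞)² satisfying the monotonicity condition P(Y(1)=0, Y(0)>0) = 0, and suppose P(Y(1)>0) > 0 and P(Y(1)>0, Y(0)>0) > 0. Let θ = P(Y(0)>0)/P(Y(1)>0). Then E[Y(1) | Y(1)>0] = θ·E[Y(1) | Y(1)>0, Y(0)>0] + (1−θ)·E[Y(1) | Y(1)>0, Y(0)=0], assuming Y(1) is integrable. -/

import Mathlib

open MeasureTheory

/-- Lee-bounds mixture identity: under monotonicity
`P(Y(1)=0, Y(0)>0) = 0`, with `θ = P(Y(0)>0)/P(Y(1)>0)`,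
`E[Y(1) ∣ Y(1)>0] = θ·E[Y(1) ∣ Y(1)>0, Y(0)>0] + (1−θ)·E[Y(1) ∣ Y(1)>0, Y(0)=0]`. -/
theorem stmt_16
    {Ω : Type*} [MeasurableSpace Ω] (μ : Measure Ω) [IsProbabilityMeasure μ]
    (Y1 Y0 : Ω → ℝ) (hY1meas : Measurable Y1) (hY0meas : Measurable Y0)
    (hY1nonneg : ∀ ω, 0 ≤ Y1 ω) (hY0nonneg : ∀ ω, 0 ≤ Y0 ω)
    (hY1int : Integrable Y1 μ)
    -- monotonicity: P(Y(1)=0, Y(0)>0) = 0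
    (hmono : μ {ω | Y1 ω = 0 ∧ 0 < Y0 ω} = 0)
    (hpos1 : 0 < μ {ω | 0 < Y1 ω})
    (hposAT : 0 < μ {ω | 0 < Y1 ω ∧ 0 < Y0 ω})
    (θ : ℝ)
    (hθ : θ = (μ {ω | 0 < Y0 ω}).toReal / (μ {ω | 0 < Y1 ω}).toReal) :
    (∫ ω in {ω | 0 < Y1 ω}, Y1 ω ∂μ) / (μ {ω | 0 < Y1 ω}).toReal
      = θ * ((∫ ω in {ω | 0 < Y1 ω ∧ 0 < Y0 ω}, Y1 ω ∂μ) /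
              (μ {ω | 0 < Y1 ω ∧ 0 < Y0 ω}).toReal)
        + (1 - θ) * ((∫ ω in {ω | 0 < Y1 ω ∧ Y0 ω = 0}, Y1 ω ∂μ) /
              (μ {ω | 0 < Y1 ω ∧ Y0 ω = 0}).toReal) := by
  set S : Set Ω := {ω | 0 < Y1 ω} with hS
  set A : Set Ω := {ω | 0 < Y1 ω ∧ 0 < Y0 ω} with hA
  set C : Set Ω := {ω | 0 < Y1 ω ∧ Y0 ω = 0} with hC
  have hAm : MeasurableSet A :=
    (measurableSet_lt measurable_const hY1meas).inter
      (measurableSet_lt measurable_const hY0meas)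
  have hCm : MeasurableSet C :=
    (measurableSet_lt measurable_const hY1meas).inter
      (hY0meas (measurableSet_singleton 0))
  have hdisj : Disjoint A C := by
    rw [Set.disjoint_left]
    rintro ω ⟨_, h0⟩ ⟨_, h0'⟩
    exact h0.ne' h0'
  have hunion : A ∪ C = S := by
    ext ω
    constructor
    · rintro (⟨h, _⟩ | ⟨h, _⟩) <;> exact h
    · intro h
      rcases (hY0nonneg ω).lt_or_eq with h0 | h0
      · exact Or.inl ⟨h, h0⟩
      · exact Or.inr ⟨h, h0.symm⟩
  -- μ {0 < Y0} = μ A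
  have hY0A : μ {ω | 0 < Y0 ω} = μ A := by
    apply le_antisymm
    · have hsub : {ω | 0 < Y0 ω} ⊆ A ∪ {ω | Y1 ω = 0 ∧ 0 < Y0 ω} := by
        intro ω h
        rcases (hY1nonneg ω).lt_or_eq with h1 | h1
        · exact Or.inl ⟨h1, h⟩
        · exact Or.inr ⟨h1.symm, h⟩
      calc μ {ω | 0 < Y0 ω} ≤ μ (A ∪ {ω | Y1 ω = 0 ∧ 0 < Y0 ω}) := measure_mono hsub
        _ ≤ μ A + μ {ω | Y1 ω = 0 ∧ 0 < Y0 ω} := measure_union_le _ _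
        _ = μ A := by rw [hmono, add_zero]
    · exact measure_mono fun ω h => h.2
  have hmeasS : μ S = μ A + μ C := by
    rw [← hunion, measure_union hdisj hCm]
  have hintS : ∫ ω in S, Y1 ω ∂μ = (∫ ω in A, Y1 ω ∂μ) + ∫ ω in C, Y1 ω ∂μ := by
    rw [← hunion, setIntegral_union hdisj hCm hY1int.integrableOn hY1int.integrableOn]
  set a := (μ A).toReal with ha
  set c := (μ C).toReal with hc
  set p := (μ S).toReal with hp
  have hAne : μ A ≠ ⊤ := measure_ne_top μ A
  have hCne : μ C ≠ ⊤ := measure_ne_top μ C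
  have hpac : p = a + c := by rw [hp, hmeasS, ENNReal.toReal_add hAne hCne]
  have hapos : 0 < a := ENNReal.toReal_pos hposAT.ne' hAne
  have hppos : 0 < p := ENNReal.toReal_pos hpos1.ne' (measure_ne_top μ S)
  have hθ' : θ = a / p := by rw [hθ, hY0A]
  set IA := ∫ ω in A, Y1 ω ∂μ
  set IC := ∫ ω in C, Y1 ω ∂μ
  rw [hintS, hθ']
  rcases eq_or_lt_of_le (ENNReal.toReal_nonneg : (0:ℝ) ≤ c) with hc0 | hcpos
  · have hμC : μ C = 0 := by
      rcases (ENNReal.toReal_eq_zero_iff _).mp hc0.symm with h | h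
      · exact h
      · exact absurd h hCne
    have hIC : IC = 0 := by
      show ∫ ω in C, Y1 ω ∂μ = 0
      rw [Measure.restrict_eq_zero.mpr hμC, integral_zero_measure]
    have hpa : p = a := by rw [hpac]; linarith
    rw [hIC, hpa]
    field_simp
    simp
  · have : (a / p) * (IA / a) + (1 - a / p) * (IC / c) = (IA + IC) / p := by
      have h1 : 1 - a / p = c / p := by
        field_simp
        linarith [hpac]
      rw [h1]
      field_simp
      rw [mul_comm c IC, mul_div_cancel_right₀ IC (hcpos.ne' : c ≠ 0)]
    rw [this]
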